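/- Let m be a positive natural number, let μ be the uniform probability measure on the cube [-1,1]^m in ℝ^m, let f : ℝ^m → ℝ be continuous and (Fréchet) differentiable at a point x ∈ ℝ^m with gradient g = ∇f(x). Define the random vulnerability ρ_rand(ε) = ∫ (f(x + ε·δ) - f(x))^2 dμ(δ). Then ρ_rand(ε)/ε^2 tends to (1/3)·‖g‖_2^2 as ε → 0 from the right. -/

import Mathlib

open MeasureTheory Filter
open Set

lemma int_Icc_id : ∫ t in Icc (-1:ℝ) 1, t = 0 := by
  rw [integral_Icc_eq_integral_Ioc, ← intervalIntegral.integral_of_le (by norm_num : (-1:ℝ) ≤ 1)]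
  simp

lemma int_Icc_sq : ∫ t in Icc (-1:ℝ) 1, t ^ 2 = 2/3 := by
  rw [integral_Icc_eq_integral_Ioc, ← intervalIntegral.integral_of_le (by norm_num : (-1:ℝ) ≤ 1)]
  simp [integral_pow]
  norm_num

lemma int_Icc_one : ∫ t in Icc (-1:ℝ) 1, (1:ℝ) = 2 := by
  simp [Real.volume_Icc]
  norm_num

lemma cube_eq (m : ℕ) :
    {δ : Fin m → ℝ | ∀ i, -1 ≤ δ i ∧ δ i ≤ 1} = Set.pi univ (fun _ => Icc (-1:ℝ) 1) := by
  ext δ; simp only [Set.mem_pi, Set.mem_univ, Set.mem_Icc, forall_true_left, Set.mem_setOf_eq, forall_const]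

lemma cube_prod_integral (m : ℕ) (f : Fin m → ℝ → ℝ) :
    ∫ δ in Set.pi univ (fun _ => Icc (-1:ℝ) 1), ∏ k, f k (δ k) =
      ∏ k, ∫ t in Icc (-1:ℝ) 1, f k t := by
  have hms : MeasurableSet (Set.pi univ (fun _ : Fin m => Icc (-1:ℝ) 1)) :=
    MeasurableSet.univ_pi fun _ => measurableSet_Icc
  rw [← integral_indicator hms]
  have : ∀ δ : Fin m → ℝ,
      (Set.pi univ (fun _ => Icc (-1:ℝ) 1)).indicator (fun δ => ∏ k, f k (δ k)) δ =
      ∏ k, (Icc (-1:ℝ) 1).indicator (f k) (δ k) := by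
    intro δ
    by_cases h : δ ∈ Set.pi univ (fun _ : Fin m => Icc (-1:ℝ) 1)
    · rw [indicator_of_mem h]
      exact Finset.prod_congr rfl fun k _ => (indicator_of_mem (h k (Set.mem_univ k)) _).symm
    · rw [indicator_of_notMem h]
      rw [Set.mem_pi] at h
      push_neg at h
      obtain ⟨i, _, hi⟩ := h
      exact (Finset.prod_eq_zero (Finset.mem_univ i) (indicator_of_notMem hi _)).symm
  simp_rw [this]
  rw [MeasureTheory.integral_fintype_prod_volume_eq_prod (fun k => (Icc (-1:ℝ) 1).indicator (f k))]
  exact Finset.prod_congr rfl fun k _ => integral_indicator measurableSet_Icc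

lemma cube_int_sq (m : ℕ) (i : Fin m) :
    ∫ δ in Set.pi univ (fun _ => Icc (-1:ℝ) 1), δ i * δ i = (2/3) * 2^(m-1) := by
  have h1 : ∀ δ : Fin m → ℝ, δ i * δ i = ∏ k, (if k = i then δ k * δ k else 1) := by
    intro δ
    rw [Finset.prod_ite_eq']
    simp
  simp_rw [h1]
  have key : (∫ δ in Set.pi univ (fun _ : Fin m => Icc (-1:ℝ) 1),
        ∏ k, (if k = i then δ k * δ k else 1)) =
      ∏ k, ∫ t in Icc (-1:ℝ) 1, (if k = i then t * t else 1) :=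
    cube_prod_integral m (fun k t => if k = i then t * t else 1)
  rw [key]
  have h2 : ∀ k : Fin m, (∫ t in Icc (-1:ℝ) 1, (if k = i then t * t else 1)) =
      if k = i then (2/3 : ℝ) else 2 := by
    intro k
    by_cases h : k = i
    · simp only [h, if_true]
      have := int_Icc_sq; simpa [pow_two] using this
    · simp only [h, if_false]; exact int_Icc_one
  rw [Finset.prod_congr rfl fun k _ => h2 k]
  rw [← Finset.mul_prod_erase Finset.univ _ (Finset.mem_univ i), if_pos rfl]
  congr 1
  rw [Finset.prod_congr rfl (fun k hk => if_neg (Finset.ne_of_mem_erase hk)),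
    Finset.prod_const, Finset.card_erase_of_mem (Finset.mem_univ i), Finset.card_univ,
    Fintype.card_fin]

lemma cube_int_offdiag (m : ℕ) (i j : Fin m) (hij : i ≠ j) :
    ∫ δ in Set.pi univ (fun _ => Icc (-1:ℝ) 1), δ i * δ j = 0 := by
  have h1 : ∀ δ : Fin m → ℝ, δ i * δ j =
      ∏ k, (if k = i then δ k else 1) * (if k = j then δ k else 1) := by
    intro δ
    rw [Finset.prod_mul_distrib, Finset.prod_ite_eq', Finset.prod_ite_eq']
    simp
  simp_rw [h1]
  have key : (∫ δ in Set.pi univ (fun _ : Fin m => Icc (-1:ℝ) 1),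
        ∏ k, (if k = i then δ k else 1) * (if k = j then δ k else 1)) =
      ∏ k, ∫ t in Icc (-1:ℝ) 1, ((if k = i then t else 1) * (if k = j then t else 1)) :=
    cube_prod_integral m (fun k t => (if k = i then t else 1) * (if k = j then t else 1))
  rw [key]
  apply Finset.prod_eq_zero (Finset.mem_univ i)
  simp [hij, int_Icc_id]

lemma key_integral (m : ℕ) (hm : 0 < m) (g : Fin m → ℝ) :
    ∫ δ, (∑ i, g i * δ i)^2
        ∂(((2:ENNReal)^m)⁻¹ • volume.restrict (Set.pi univ (fun _ => Icc (-1:ℝ) 1)))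
      = (1/3) * ∑ i, (g i)^2 := by
  rw [integral_smul_measure]
  have htr : (((2:ENNReal)^m)⁻¹).toReal = ((2:ℝ)^m)⁻¹ := by
    rw [ENNReal.toReal_inv, ENNReal.toReal_pow]
    norm_num
  rw [htr]
  have hS : IsCompact (Set.pi univ (fun _ : Fin m => Icc (-1:ℝ) 1)) :=
    isCompact_univ_pi fun _ => isCompact_Icc
  have hint : ∀ i j : Fin m,
      IntegrableOn (fun δ : Fin m → ℝ => g i * g j * (δ i * δ j))
        (Set.pi univ (fun _ => Icc (-1:ℝ) 1)) volume :=
    fun i j => (((continuous_const.mul ((continuous_apply i).mul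
      (continuous_apply j)))).continuousOn).integrableOn_compact hS
  have hJ : (∫ δ in Set.pi univ (fun _ : Fin m => Icc (-1:ℝ) 1), (∑ i, g i * δ i)^2)
      = ∑ i, ∑ j, g i * g j * ∫ δ in Set.pi univ (fun _ : Fin m => Icc (-1:ℝ) 1), δ i * δ j := by
    have expand : ∀ δ : Fin m → ℝ, (∑ i, g i * δ i)^2 =
        ∑ i, ∑ j, g i * g j * (δ i * δ j) := by
      intro δ
      rw [pow_two, Finset.sum_mul_sum]
      exact Finset.sum_congr rfl fun i _ => Finset.sum_congr rfl fun j _ => by ring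
    simp_rw [expand]
    rw [integral_finset_sum _ (fun i _ => integrable_finset_sum _ (fun j _ => hint i j))]
    refine Finset.sum_congr rfl fun i _ => ?_
    rw [integral_finset_sum _ (fun j _ => hint i j)]
    exact Finset.sum_congr rfl fun j _ => integral_const_mul _ _
  rw [hJ]
  have hdiag : ∀ i : Fin m,
      (∑ j, g i * g j * ∫ δ in Set.pi univ (fun _ : Fin m => Icc (-1:ℝ) 1), δ i * δ j)
        = (g i)^2 * ((2/3) * 2^(m-1)) := by
    intro i
    rw [Finset.sum_eq_single i]
    · rw [cube_int_sq]; ring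
    · intro j _ hj
      rw [cube_int_offdiag m i j (Ne.symm hj)]; ring
    · intro h; exact absurd (Finset.mem_univ i) h
  rw [Finset.sum_congr rfl fun i _ => hdiag i, ← Finset.sum_mul, smul_eq_mul]
  obtain ⟨n, rfl⟩ : ∃ n, m = n + 1 := ⟨m - 1, (Nat.succ_pred_eq_of_pos hm).symm⟩
  have h2 : (2:ℝ)^n ≠ 0 := by positivity
  rw [pow_succ]
  simp only [Nat.add_sub_cancel]
  field_simp


/-- The random vulnerability `ρ_rand(ε) = ∫ (f(x+εδ) - f(x))² dμ(δ)` of a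
continuous function differentiable at `x` with gradient `g`, under the uniform
measure on the cube `[-1,1]^m`, satisfies `ρ_rand(ε)/ε² → (1/3)‖g‖₂²` as `ε → 0⁺`. -/
theorem random_vulnerability_limit (m : ℕ) (hm : 0 < m)
    (μ : Measure (Fin m → ℝ))
    (hμ : μ = ((2 : ENNReal) ^ m)⁻¹ •
      volume.restrict {δ : Fin m → ℝ | ∀ i, -1 ≤ δ i ∧ δ i ≤ 1})
    (f : (Fin m → ℝ) → ℝ) (x g : Fin m → ℝ)
    (hf_cont : Continuous f)
    (L : (Fin m → ℝ) →L[ℝ] ℝ) (hf : HasFDerivAt f L x)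
    (hL : ∀ δ, L δ = ∑ i, g i * δ i) :
    Tendsto (fun ε : ℝ => (∫ δ, (f (x + ε • δ) - f x) ^ 2 ∂μ) / ε ^ 2)
      (nhdsWithin 0 (Set.Ioi 0)) (nhds ((1 / 3) * ∑ i, (g i) ^ 2)) := by
  subst hμ
  rw [cube_eq m]
  set ν : Measure (Fin m → ℝ) :=
    ((2 : ENNReal) ^ m)⁻¹ • volume.restrict (Set.pi univ (fun _ => Icc (-1:ℝ) 1)) with hν
  have hms : MeasurableSet (Set.pi univ (fun _ : Fin m => Icc (-1:ℝ) 1)) :=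
    MeasurableSet.univ_pi fun _ => measurableSet_Icc
  have h2m : ((2 : ENNReal) ^ m)⁻¹ ≠ 0 := by
    simp [ENNReal.inv_ne_zero, ENNReal.pow_ne_top]
  haveI : IsFiniteMeasure ν := by
    constructor
    rw [hν, Measure.smul_apply, Measure.restrict_apply MeasurableSet.univ, Set.univ_inter]
    have hvol : volume (Set.pi univ (fun _ : Fin m => Icc (-1:ℝ) 1))
        = ∏ _i : Fin m, volume (Icc (-1:ℝ) 1) := volume_pi_pi _
    rw [hvol]
    simp only [Real.volume_Icc]
    rw [Finset.prod_const, Finset.card_univ, Fintype.card_fin]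
    have h2 : ENNReal.ofReal (1 - -1) = 2 := by norm_num
    rw [h2, smul_eq_mul, ENNReal.inv_mul_cancel (by positivity) (by simp)]
    exact ENNReal.one_lt_top
  simp only [← integral_div]
  rw [show (1/3 : ℝ) * ∑ i, (g i)^2 = ∫ δ, (∑ i, g i * δ i)^2 ∂ν from (key_integral m hm g).symm]
  apply tendsto_integral_filter_of_dominated_convergence (fun _ => (‖L‖ + 1)^2)
  · exact Eventually.of_forall fun ε =>
      ((((hf_cont.comp (continuous_const.add (continuous_id.const_smul ε))).sub
        continuous_const).pow 2).div_const (ε^2)).aestronglyMeasurable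
  · have hlittle := Asymptotics.isLittleO_iff.mp hf.isLittleO one_pos
    rw [Metric.eventually_nhds_iff] at hlittle
    obtain ⟨r, hr0, hball⟩ := hlittle
    filter_upwards [Ioo_mem_nhdsGT_of_mem (by exact ⟨le_refl 0, hr0⟩ : (0:ℝ) ∈ Ico 0 r)]
      with ε hε
    rw [hν, Measure.ae_ennreal_smul_measure_iff h2m]
    filter_upwards [ae_restrict_mem hms] with δ hδ
    have hδn : ‖δ‖ ≤ 1 := by
      rw [pi_norm_le_iff_of_nonneg zero_le_one]
      intro i
      rw [Real.norm_eq_abs, abs_le]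
      exact ⟨(hδ i (Set.mem_univ i)).1, (hδ i (Set.mem_univ i)).2⟩
    have hεpos : (0:ℝ) < ε := hε.1
    have hnsmul : ‖ε • δ‖ ≤ ε := by
      rw [norm_smul, Real.norm_eq_abs, abs_of_pos hεpos]
      exact mul_le_of_le_one_right hεpos.le hδn
    have hdist : dist (x + ε • δ) x < r := by
      rw [dist_eq_norm, add_sub_cancel_left]
      exact lt_of_le_of_lt hnsmul hε.2
    have hb := hball hdist
    rw [add_sub_cancel_left, one_mul] at hb
    have hLb : ‖L (ε • δ)‖ ≤ ‖L‖ * ε :=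
      le_trans (L.le_opNorm _) (mul_le_mul_of_nonneg_left hnsmul (norm_nonneg L))
    have habs : |f (x + ε • δ) - f x| ≤ (‖L‖ + 1) * ε := by
      have hsplit : f (x + ε • δ) - f x = (f (x + ε • δ) - f x - L (ε • δ)) + L (ε • δ) := by
        ring
      rw [hsplit]
      calc |(f (x + ε • δ) - f x - L (ε • δ)) + L (ε • δ)|
          ≤ |f (x + ε • δ) - f x - L (ε • δ)| + |L (ε • δ)| := abs_add_le _ _
        _ ≤ ε + ‖L‖ * ε := add_le_add (le_trans hb hnsmul) hLb
        _ = (‖L‖ + 1) * ε := by ring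
    have hnn : (0:ℝ) ≤ (f (x + ε • δ) - f x)^2 / ε^2 := by positivity
    rw [Real.norm_eq_abs, abs_of_nonneg hnn, div_le_iff₀ (by positivity)]
    calc (f (x + ε • δ) - f x)^2 = |f (x + ε • δ) - f x|^2 := (sq_abs _).symm
      _ ≤ ((‖L‖ + 1) * ε)^2 := pow_le_pow_left₀ (abs_nonneg _) habs 2
      _ = (‖L‖ + 1)^2 * ε^2 := by ring
  · exact integrable_const _
  · refine Eventually.of_forall fun δ => ?_
    have h1 : HasDerivAt (fun ε : ℝ => x + ε • δ) δ 0 := by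
      simpa using ((hasDerivAt_id (0:ℝ)).smul_const δ).const_add x
    have h2 : HasDerivAt (fun ε : ℝ => f (x + ε • δ)) (L δ) 0 := by
      have := HasFDerivAt.comp_hasDerivAt (0:ℝ) (by simpa using hf) h1
      exact this
    have h4 : Tendsto (slope (fun ε : ℝ => f (x + ε • δ)) 0) (nhdsWithin 0 (Set.Ioi 0))
        (nhds (L δ)) :=
      (hasDerivAt_iff_tendsto_slope.mp h2).mono_left
        (nhdsWithin_mono 0 fun y hy => ne_of_gt hy)
    exact (hL δ) ▸ (h4.pow 2).congr fun ε => by simp [slope_def_field, div_pow]
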